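/- Let L ∈ ℝ^{N×N} be the Laplacian matrix of a strongly connected weighted directed graph, let μ ∈ ℝ^N satisfy μ_i > 0 for all i and μ^⊤ L = 0, and let M = diag(μ_1,…,μ_N). Then the symmetric matrix L^⊤ M + M L is positive semidefinite, i.e., x^⊤ (L^⊤ M + M L) x ≥ 0 for all x ∈ ℝ^N. -/

import Mathlib

open Finset Matrix

/-- In the weighted directed graph with weights `a` (an edge from node `j` to
node `i` whenever `a i j > 0`), node `j` is reachable from node `i`. -/
def Reachable {N : ℕ} (a : Fin N → Fin N → ℝ) : Fin N → Fin N → Prop :=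
  Relation.ReflTransGen (fun u v => 0 < a v u)

/-- The Laplacian matrix of the weighted directed graph with weights `a`:
`[L]ᵢⱼ = −aᵢⱼ` for `i ≠ j` and `[L]ᵢᵢ = ∑_{ℓ≠i} aᵢℓ`. -/
def lap {N : ℕ} (a : Fin N → Fin N → ℝ) : Matrix (Fin N) (Fin N) ℝ :=
  Matrix.of fun i j =>
    if i = j then ∑ ℓ ∈ Finset.univ.erase i, a i ℓ else -(a i j)

/-- Swap a double sum over off-diagonal pairs. -/
lemma swap_erase_sum {N : ℕ} (f : Fin N → Fin N → ℝ) :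
    ∑ i, ∑ k ∈ Finset.univ.erase i, f i k
      = ∑ k, ∑ i ∈ Finset.univ.erase k, f i k := by
  have h1 : ∀ i : Fin N, ∑ k ∈ Finset.univ.erase i, f i k
      = (∑ k, f i k) - f i i := fun i =>
    Finset.sum_erase_eq_sub (Finset.mem_univ i)
  have h2 : ∀ k : Fin N, ∑ i ∈ Finset.univ.erase k, f i k
      = (∑ i, f i k) - f k k := fun k =>
    Finset.sum_erase_eq_sub (Finset.mem_univ k)
  simp only [h1, h2, Finset.sum_sub_distrib]
  rw [Finset.sum_comm]

/-- If `L` is the Laplacian of a strongly connected weighted directed graph,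
`μ` is a positive left null vector of `L`, and `M = diag(μ)`, then
`Lᵀ M + M L` is positive semidefinite. -/
theorem laplacian_transpose_mul_diag_add_posSemidef
    (N : ℕ) (hN : 0 < N)
    (a : Fin N → Fin N → ℝ)
    (ha : ∀ i j : Fin N, i ≠ j → 0 ≤ a i j)
    (hsc : ∀ i j : Fin N, Reachable a i j)
    (μ : Fin N → ℝ) (hμ : ∀ i, 0 < μ i)
    (hμL : ∀ j : Fin N, ∑ i, μ i * lap a i j = 0) :
    ∀ x : Fin N → ℝ,
      0 ≤ x ⬝ᵥ ((lap a)ᵀ * Matrix.diagonal μ + Matrix.diagonal μ * lap a).mulVec x := by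
  intro x
  set L := lap a with hLdef
  -- the row of L applied to x
  have row : ∀ i : Fin N, ∑ k, L i k * x k
      = ∑ k ∈ Finset.univ.erase i, a i k * (x i - x k) := by
    intro i
    rw [← Finset.sum_erase_add _ _ (Finset.mem_univ i)]
    have hii : L i i = ∑ ℓ ∈ Finset.univ.erase i, a i ℓ := by
      simp [hLdef, lap]
    have hoff : ∀ k ∈ Finset.univ.erase i, L i k * x k = -(a i k * x k) := by
      intro k hk
      have : i ≠ k := (Finset.ne_of_mem_erase hk).symm
      simp [hLdef, lap, this]
    rw [Finset.sum_congr rfl hoff, hii, Finset.sum_mul, ← Finset.sum_add_distrib]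
    exact Finset.sum_congr rfl fun k _ => by ring
  -- expand the quadratic form
  have hQ : x ⬝ᵥ ((lap a)ᵀ * Matrix.diagonal μ + Matrix.diagonal μ * lap a).mulVec x
      = 2 * ∑ i, μ i * x i * ∑ k, L i k * x k := by
    simp only [dotProduct, mulVec, Matrix.add_apply, Matrix.mul_diagonal,
      Matrix.diagonal_mul, Matrix.transpose_apply, ← hLdef]
    have : ∀ j : Fin N, x j * (∑ k, (L k j * μ k + μ j * L j k) * x k)
        = (∑ k, x j * (L k j * μ k * x k)) + ∑ k, x j * (μ j * L j k * x k) := by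
      intro j
      rw [← Finset.sum_add_distrib, Finset.mul_sum]
      exact Finset.sum_congr rfl fun k _ => by ring
    rw [Finset.sum_congr rfl fun j _ => this j, Finset.sum_add_distrib]
    rw [Finset.sum_comm (f := fun j k => x j * (L k j * μ k * x k))]
    rw [Finset.mul_sum, ← Finset.sum_add_distrib]
    refine Finset.sum_congr rfl fun i _ => ?_
    rw [Finset.mul_sum, Finset.mul_sum, ← Finset.sum_add_distrib]
    exact Finset.sum_congr rfl fun k _ => by ring
  -- balance condition from the left null vector
  have bal : ∀ j : Fin N, ∑ i ∈ Finset.univ.erase j, μ i * a i j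
      = μ j * ∑ ℓ ∈ Finset.univ.erase j, a j ℓ := by
    intro j
    have h0 := hμL j
    rw [← Finset.sum_erase_add _ _ (Finset.mem_univ j)] at h0
    have hjj : μ j * lap a j j = μ j * ∑ ℓ ∈ Finset.univ.erase j, a j ℓ := by
      simp [lap]
    have hoff : ∀ i ∈ Finset.univ.erase j, μ i * lap a i j = -(μ i * a i j) := by
      intro i hi
      have : i ≠ j := Finset.ne_of_mem_erase hi
      simp [lap, this]
    rw [Finset.sum_congr rfl hoff, hjj, Finset.sum_neg_distrib] at h0
    linarith
  -- rewrite the quadratic form as a sum of squares plus a telescoping part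
  rw [hQ]
  have key : 2 * ∑ i, μ i * x i * ∑ k, L i k * x k
      = (∑ i, ∑ k ∈ Finset.univ.erase i, μ i * a i k * (x i - x k) ^ 2)
        + ((∑ i, ∑ k ∈ Finset.univ.erase i, μ i * a i k * x i ^ 2)
           - ∑ i, ∑ k ∈ Finset.univ.erase i, μ i * a i k * x k ^ 2) := by
    simp only [row]
    rw [Finset.mul_sum, ← Finset.sum_sub_distrib, ← Finset.sum_add_distrib]
    refine Finset.sum_congr rfl fun i _ => ?_
    rw [Finset.mul_sum, Finset.mul_sum, ← Finset.sum_sub_distrib, ← Finset.sum_add_distrib]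
    exact Finset.sum_congr rfl fun k _ => by ring
  rw [key]
  have zero2 : (∑ i, ∑ k ∈ Finset.univ.erase i, μ i * a i k * x i ^ 2)
      - (∑ i, ∑ k ∈ Finset.univ.erase i, μ i * a i k * x k ^ 2) = 0 := by
    rw [swap_erase_sum (fun i k => μ i * a i k * x k ^ 2)]
    have : ∀ k : Fin N, ∑ i ∈ Finset.univ.erase k, μ i * a i k * x k ^ 2
        = (∑ ℓ ∈ Finset.univ.erase k, μ k * a k ℓ * x k ^ 2) := by
      intro k
      calc ∑ i ∈ Finset.univ.erase k, μ i * a i k * x k ^ 2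
          = (∑ i ∈ Finset.univ.erase k, μ i * a i k) * x k ^ 2 :=
            (Finset.sum_mul _ _ _).symm
        _ = (μ k * ∑ ℓ ∈ Finset.univ.erase k, a k ℓ) * x k ^ 2 := by rw [bal k]
        _ = ∑ ℓ ∈ Finset.univ.erase k, μ k * a k ℓ * x k ^ 2 := by
            rw [Finset.mul_sum, Finset.sum_mul]
    rw [Finset.sum_congr rfl fun k _ => this k]
    exact sub_self _
  rw [zero2, add_zero]
  refine Finset.sum_nonneg fun i _ => Finset.sum_nonneg fun k hk => ?_
  have hik : i ≠ k := (Finset.ne_of_mem_erase hk).symm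
  exact mul_nonneg (mul_nonneg (hμ i).le (ha i k hik)) (sq_nonneg _)
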